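/- arXiv:1007.3795 — 4 statements merged into one kernel-verified Lean document; each statement's English description precedes it below -/
import Mathlib

section
/- Fix an integer N ≥ 2, a real x with 0 < x < 1, and a nonzero real m. Let A be the Cartan matrix of type A_{N−1} (A_{jj} = 2, A_{jk} = −1 if |j−k| = 1, A_{jk} = 0 otherwise, 1 ≤ j,k ≤ N−1). Define (N−1)×(N−1) real matrices M and I by M_{jk} = [A_{jk}·m]_x / [m]_x and I_{jk} = [min(j,k)·m]_x · [(N − max(j,k))·m]_x / ([m]_x · [N m]_x). Then M·I = I·M = 1 (the identity matrix); i.e. (I_{jk}) is the inverse of the deformed Cartan matrix ([A_{jk}m]_x/[m]_x). -/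
noncomputable section

/-- `[a]_x = (x^a - x^{-a})/(x - x⁻¹)` for real `a` (with `x^a` the real power). -/
def brx (x a : ℝ) : ℝ := (x ^ a - x ^ (-a)) / (x - x⁻¹)

lemma brx_zero (x : ℝ) : brx x 0 = 0 := by simp [brx]

lemma brx_neg (x a : ℝ) : brx x (-a) = - brx x a := by
  rw [brx, brx, neg_neg, ← neg_sub, neg_div]

lemma brx_ne_zero (x : ℝ) (hx0 : 0 < x) (hx1 : x < 1) (a : ℝ) (ha : a ≠ 0) :
    brx x a ≠ 0 := by
  have h1 : 1 < x⁻¹ := one_lt_inv_iff₀.mpr ⟨hx0, hx1⟩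
  have hd : x - x⁻¹ ≠ 0 := by nlinarith
  rw [brx, div_ne_zero_iff]
  refine ⟨sub_ne_zero.mpr ?_, hd⟩
  rcases lt_or_gt_of_ne ha with h | h
  · exact (Real.rpow_lt_rpow_of_exponent_gt hx0 hx1 (by linarith : a < -a)).ne'
  · exact (Real.rpow_lt_rpow_of_exponent_gt hx0 hx1 (by linarith : -a < a)).ne

lemma brx_key1 (x : ℝ) (hx0 : 0 < x) (hx1 : x < 1) (a b : ℝ) :
    brx x (2*b) * brx x a = brx x b * (brx x (a+b) + brx x (a-b)) := by
  have hxa := (Real.rpow_pos_of_pos hx0 a).ne'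
  have hxb := (Real.rpow_pos_of_pos hx0 b).ne'
  have h2 : x * x - 1 ≠ 0 := by nlinarith
  have en : ∀ s : ℝ, x ^ (-s) = (x ^ s)⁻¹ := fun s => Real.rpow_neg hx0.le s
  have e : ∀ s t : ℝ, x ^ (s + t) = x ^ s * x ^ t := fun s t => Real.rpow_add hx0 s t
  have es : ∀ s t : ℝ, x ^ (s - t) = x ^ s / x ^ t := fun s t => Real.rpow_sub hx0 s t
  have ed : x - x⁻¹ = (x * x - 1) / x := by field_simp
  simp only [brx, two_mul, en, e, es, ed]
  field_simp
  ring

lemma brx_key2 (x : ℝ) (hx0 : 0 < x) (hx1 : x < 1) (a b c : ℝ) :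
    brx x (a+b) * brx x c - brx x a * brx x (c-b) = brx x b * brx x (a+c) := by
  have hxa := (Real.rpow_pos_of_pos hx0 a).ne'
  have hxb := (Real.rpow_pos_of_pos hx0 b).ne'
  have hxc := (Real.rpow_pos_of_pos hx0 c).ne'
  have h2 : x * x - 1 ≠ 0 := by nlinarith
  have en : ∀ s : ℝ, x ^ (-s) = (x ^ s)⁻¹ := fun s => Real.rpow_neg hx0.le s
  have e : ∀ s t : ℝ, x ^ (s + t) = x ^ s * x ^ t := fun s t => Real.rpow_add hx0 s t
  have es : ∀ s t : ℝ, x ^ (s - t) = x ^ s / x ^ t := fun s t => Real.rpow_sub hx0 s t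
  have ed : x - x⁻¹ = (x * x - 1) / x := by field_simp
  simp only [brx, en, e, es, ed]
  field_simp
  ring

/-- The entries of the candidate inverse matrix, as a function of natural indices. -/
def Jm (x m : ℝ) (N p q : ℕ) : ℝ :=
  brx x (((min p q : ℕ) : ℝ) * m) * brx x (((N:ℝ) - ((max p q : ℕ) : ℝ)) * m)
    / (brx x m * brx x ((N:ℝ) * m))

lemma Jm_zero_left (x m : ℝ) (N q : ℕ) : Jm x m N 0 q = 0 := by
  simp [Jm, brx_zero]

lemma Jm_top (x m : ℝ) (N q : ℕ) (hq : q < N) : Jm x m N N q = 0 := by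
  rw [Jm, max_eq_left hq.le]
  simp [brx_zero]

lemma main_rec (x : ℝ) (hx0 : 0 < x) (hx1 : x < 1) (m : ℝ) (hm : m ≠ 0)
    (N : ℕ) (hN : 2 ≤ N) (a b : ℕ) (ha : a < N - 1) (hb : b < N - 1) :
    brx x (2*m) / brx x m * Jm x m N (a+1) (b+1)
      - Jm x m N a (b+1) - Jm x m N (a+2) (b+1)
      = if a = b then 1 else 0 := by
  simp only [Jm]
  have hbm : brx x m ≠ 0 := brx_ne_zero x hx0 hx1 m hm
  have hbN : brx x ((N:ℝ) * m) ≠ 0 := by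
    refine brx_ne_zero x hx0 hx1 _ (mul_ne_zero ?_ hm)
    exact_mod_cast (by omega : N ≠ 0)
  have h1 : ∀ u v w : ℝ, u + 1 = v → v + 1 = w →
      brx x (2*m) * brx x (v*m) = brx x m * (brx x (w*m) + brx x (u*m)) := by
    intro u v w huv hvw
    have h := brx_key1 x hx0 hx1 (v*m) m
    rw [show v*m + m = w*m by rw [← hvw]; ring, show v*m - m = u*m by rw [← huv]; ring] at h
    linarith [h]
  have diag : ∀ t : ℝ, brx x ((t+2)*m) * brx x (((N:ℝ) - (t+1))*m)
      - brx x ((t+1)*m) * brx x (((N:ℝ) - (t+2))*m) = brx x m * brx x ((N:ℝ)*m) := by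
    intro t
    have h := brx_key2 x hx0 hx1 ((t+1)*m) m (((N:ℝ) - (t+1))*m)
    rw [show (t+1)*m + m = (t+2)*m by ring,
        show ((N:ℝ) - (t+1))*m - m = ((N:ℝ) - (t+2))*m by ring,
        show (t+1)*m + ((N:ℝ) - (t+1))*m = (N:ℝ)*m by ring] at h
    exact h
  rcases lt_trichotomy a b with h | h | h
  · rw [if_neg (by omega)]
    rw [min_eq_left (by omega : a + 1 ≤ b + 1), max_eq_right (by omega : a + 1 ≤ b + 1),
        min_eq_left (by omega : a ≤ b + 1), max_eq_right (by omega : a ≤ b + 1),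
        min_eq_left (by omega : a + 2 ≤ b + 1), max_eq_right (by omega : a + 2 ≤ b + 1)]
    push_cast
    have hbN' : brx x (m * (N:ℝ)) ≠ 0 := by rw [mul_comm]; exact hbN
    have key := h1 (a:ℝ) ((a:ℝ)+1) ((a:ℝ)+2) (by ring) (by ring)
    field_simp
    linear_combination (norm := ring_nf) (brx x (((N:ℝ) - ((b:ℝ)+1))*m)) * key
  · subst h
    rw [if_pos rfl]
    rw [min_self, max_self,
        min_eq_left (by omega : a ≤ a + 1), max_eq_right (by omega : a ≤ a + 1),
        min_eq_right (by omega : a + 1 ≤ a + 2), max_eq_left (by omega : a + 1 ≤ a + 2)]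
    push_cast
    have hbN' : brx x (m * (N:ℝ)) ≠ 0 := by rw [mul_comm]; exact hbN
    have key := h1 (a:ℝ) ((a:ℝ)+1) ((a:ℝ)+2) (by ring) (by ring)
    have d := diag (a:ℝ)
    field_simp
    linear_combination (norm := ring_nf) (brx x (((N:ℝ) - ((a:ℝ)+1))*m)) * key
      + (brx x m) * d
  · rw [if_neg (by omega)]
    rw [min_eq_right (by omega : b + 1 ≤ a + 1), max_eq_left (by omega : b + 1 ≤ a + 1),
        min_eq_right (by omega : b + 1 ≤ a), max_eq_left (by omega : b + 1 ≤ a),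
        min_eq_right (by omega : b + 1 ≤ a + 2), max_eq_left (by omega : b + 1 ≤ a + 2)]
    push_cast
    have hbN' : brx x (m * (N:ℝ)) ≠ 0 := by rw [mul_comm]; exact hbN
    have key := h1 ((N:ℝ) - ((a:ℝ)+2)) ((N:ℝ) - ((a:ℝ)+1)) ((N:ℝ) - (a:ℝ)) (by ring) (by ring)
    field_simp
    linear_combination (norm := ring_nf) (brx x (((b:ℝ)+1)*m)) * key

/-- The matrix `(I_{jk}) = ([min(j,k)m]_x [(N-max(j,k))m]_x / ([m]_x [Nm]_x))` is the
two-sided inverse of the deformed Cartan matrix `([A_{jk}m]_x/[m]_x)` of type `A_{N-1}`. -/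
theorem deformed_cartan_inverse (N : ℕ) (hN : 2 ≤ N) (x : ℝ) (hx0 : 0 < x) (hx1 : x < 1)
    (m : ℝ) (hm : m ≠ 0)
    (A : Matrix (Fin (N - 1)) (Fin (N - 1)) ℝ)
    (hA : A = Matrix.of fun (j k : Fin (N - 1)) =>
      if j = k then 2
      else if (j : ℕ) + 1 = (k : ℕ) ∨ (k : ℕ) + 1 = (j : ℕ) then -1 else 0)
    (M : Matrix (Fin (N - 1)) (Fin (N - 1)) ℝ)
    (hM : M = Matrix.of fun (j k : Fin (N - 1)) => brx x (A j k * m) / brx x m)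
    (I : Matrix (Fin (N - 1)) (Fin (N - 1)) ℝ)
    (hI : I = Matrix.of fun (j k : Fin (N - 1)) =>
      brx x ((min ((j : ℕ) + 1) ((k : ℕ) + 1) : ℕ) * m)
        * brx x (((N : ℝ) - (max ((j : ℕ) + 1) ((k : ℕ) + 1) : ℕ)) * m)
        / (brx x m * brx x ((N : ℝ) * m))) :
    M * I = 1 ∧ I * M = 1 := by
  have hbm : brx x m ≠ 0 := brx_ne_zero x hx0 hx1 m hm
  have hMI : M * I = 1 := by
    ext j k
    have hj : (j:ℕ) < N - 1 := j.isLt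
    have hk : (k:ℕ) < N - 1 := k.isLt
    rw [Matrix.mul_apply, Matrix.one_apply]
    have hstep : ∀ l : Fin (N-1), M j l * I l k
        = (if (l:ℕ) = (j:ℕ) then brx x (2*m)/brx x m * Jm x m N ((j:ℕ)+1) ((k:ℕ)+1) else 0)
          + (if (l:ℕ) + 1 = (j:ℕ) then -Jm x m N (j:ℕ) ((k:ℕ)+1) else 0)
          + (if (l:ℕ) = (j:ℕ) + 1 then -Jm x m N ((j:ℕ)+2) ((k:ℕ)+1) else 0) := by
      intro l
      rw [hM, hA, hI]
      simp only [Matrix.of_apply]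
      by_cases h1 : j = l
      · subst h1
        rw [if_pos rfl, if_pos rfl, if_neg (by omega), if_neg (by omega)]
        simp [Jm]
      · rw [if_neg h1, if_neg (fun hh : (l:ℕ) = (j:ℕ) => h1 (Fin.ext hh.symm))]
        by_cases h2 : (l:ℕ) + 1 = (j:ℕ)
        · rw [if_pos (Or.inr h2), if_pos h2, if_neg (by omega)]
          rw [neg_one_mul, brx_neg, neg_div, div_self hbm]
          rw [h2]
          simp only [Jm]
          ring
        · by_cases h3 : (j:ℕ) + 1 = (l:ℕ)
          · rw [if_pos (Or.inl h3), if_neg h2, if_pos h3.symm]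
            have h3' : (l:ℕ) + 1 = (j:ℕ) + 2 := by omega
            rw [neg_one_mul, brx_neg, neg_div, div_self hbm]
            rw [h3']
            simp only [Jm]
            ring
          · rw [if_neg (by tauto), if_neg h2, if_neg (fun hh => h3 hh.symm)]
            simp [brx_zero]
    rw [Finset.sum_congr rfl (fun l _ => hstep l)]
    rw [Fin.sum_univ_eq_sum_range (fun l =>
        (if l = (j:ℕ) then brx x (2*m)/brx x m * Jm x m N ((j:ℕ)+1) ((k:ℕ)+1) else 0)
        + (if l + 1 = (j:ℕ) then -Jm x m N (j:ℕ) ((k:ℕ)+1) else 0)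
        + (if l = (j:ℕ) + 1 then -Jm x m N ((j:ℕ)+2) ((k:ℕ)+1) else 0)) (N-1)]
    rw [Finset.sum_add_distrib, Finset.sum_add_distrib]
    have hS1 : (∑ l ∈ Finset.range (N-1), if l = (j:ℕ) then
        brx x (2*m)/brx x m * Jm x m N ((j:ℕ)+1) ((k:ℕ)+1) else 0)
        = brx x (2*m)/brx x m * Jm x m N ((j:ℕ)+1) ((k:ℕ)+1) := by
      rw [Finset.sum_ite_eq' (Finset.range (N-1)) ((j:ℕ))
        (fun _ => brx x (2*m)/brx x m * Jm x m N ((j:ℕ)+1) ((k:ℕ)+1))]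
      rw [if_pos (Finset.mem_range.mpr hj)]
    have hS2 : (∑ l ∈ Finset.range (N-1), if l + 1 = (j:ℕ) then
        -Jm x m N (j:ℕ) ((k:ℕ)+1) else 0) = -Jm x m N (j:ℕ) ((k:ℕ)+1) := by
      by_cases hj0 : (j:ℕ) = 0
      · rw [hj0, Jm_zero_left]
        simp
      · obtain ⟨j', hj'⟩ := Nat.exists_eq_succ_of_ne_zero hj0
        rw [hj']
        simp only [Nat.succ_eq_add_one, add_left_inj]
        rw [Finset.sum_ite_eq' (Finset.range (N-1)) j'
          (fun _ => -Jm x m N (j'+1) ((k:ℕ)+1))]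
        rw [if_pos (Finset.mem_range.mpr (by omega))]
    have hS3 : (∑ l ∈ Finset.range (N-1), if l = (j:ℕ) + 1 then
        -Jm x m N ((j:ℕ)+2) ((k:ℕ)+1) else 0) = -Jm x m N ((j:ℕ)+2) ((k:ℕ)+1) := by
      rw [Finset.sum_ite_eq' (Finset.range (N-1)) ((j:ℕ)+1)
        (fun _ => -Jm x m N ((j:ℕ)+2) ((k:ℕ)+1))]
      by_cases hlt : (j:ℕ) + 1 < N - 1
      · rw [if_pos (Finset.mem_range.mpr hlt)]
      · rw [if_neg (fun hc => hlt (Finset.mem_range.mp hc))]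
        have hNN : (j:ℕ) + 2 = N := by omega
        rw [hNN, Jm_top x m N ((k:ℕ)+1) (by omega)]
        simp
    rw [hS1, hS2, hS3]
    have hmain := main_rec x hx0 hx1 m hm N hN (j:ℕ) (k:ℕ) hj hk
    have hvk : (if j = k then (1:ℝ) else 0) = if (j:ℕ) = (k:ℕ) then 1 else 0 := by
      simp [Fin.val_eq_val]
    rw [hvk]
    linarith [hmain]
  refine ⟨hMI, ?_⟩
  have hMsym : Matrix.transpose M = M := by
    rw [hM, hA]
    ext j k
    simp only [Matrix.transpose_apply, Matrix.of_apply]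
    by_cases h : j = k
    · simp [h]
    · simp [h, Ne.symm h, or_comm]
  have hIsym : Matrix.transpose I = I := by
    rw [hI]
    ext j k
    simp only [Matrix.transpose_apply, Matrix.of_apply]
    rw [min_comm ((k:ℕ)+1) ((j:ℕ)+1), max_comm ((k:ℕ)+1) ((j:ℕ)+1)]
  conv_lhs => rw [← hIsym, ← hMsym]
  rw [← Matrix.transpose_mul, hMI, Matrix.transpose_one]
end
end

section
/- Let c, p, p′ ∈ ℝ and let j be an integer, and set q = x^{2r}. Define g(w) = (1 − w^{−2})·(x^{2p+2c+2−j}/w;q)_∞·(x^{−2p′+2r−2c+j}/w;q)_∞ / ((x^{2r−2p−2c−2+j}/w;q)_∞·(x^{2c+2p′−j}/w;q)_∞). Then for every w ∈ ℂ∖{0} at which both denominators are nonzero (for w and for 1/w): g(w)·w·Θ_q(x^{2c+2p−j+2}·w)·Θ_q(x^{2c+2p′−j}/w) + g(1/w)·w^{−1}·Θ_q(x^{2c+2p−j+2}/w)·Θ_q(x^{2c+2p′−j}·w) = 0. (This is the weak equality g_j(w)·w·Θ_{x^{2r}}(x^{2c+2π_{1,j}−j+2}w)·Θ_{x^{2r}}(x^{2c+2π_{1,j+1}−j}/w)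 ∼_w 0 of the paper, with p = π_{1,j}, p′ = π_{1,j+1}.) -/
noncomputable section

/-- `x^w := exp(w · log x)` for a real base `x` and a complex exponent `w`. -/
def cxp (x : ℝ) (w : ℂ) : ℂ := Complex.exp (w * Real.log x)

/-- The infinite product `(z;p)_∞ = ∏_{n≥0} (1 - z pⁿ)`. -/
def qpoch (z p : ℂ) : ℂ := ∏' n : ℕ, (1 - z * p ^ n)

/-- The theta function `Θ_p(z) = (p;p)_∞ (z;p)_∞ (p/z;p)_∞`. -/
def jtheta (p z : ℂ) : ℂ := qpoch p p * qpoch z p * qpoch (p / z) p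

set_option maxHeartbeats 1000000 in
/-- The weak equality `g_j(w)·w·Θ_q(x^{2c+2p-j+2}w)·Θ_q(x^{2c+2p'-j}/w) ∼_w 0`:
the sum of the displayed expression at `w` and at `1/w` vanishes. -/
theorem weak_equality_g (x : ℝ) (hx0 : 0 < x) (hx1 : x < 1)
    (r : ℝ) (hr : 0 < r) (c p p' : ℝ) (j : ℤ)
    (g : ℂ → ℂ)
    (hg : g = fun v => (1 - (v⁻¹) ^ 2) *
      qpoch (cxp x (2 * p + 2 * c + 2 - j) / v) (cxp x (2 * r)) *
      qpoch (cxp x (-2 * p' + 2 * r - 2 * c + j) / v) (cxp x (2 * r)) /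
      (qpoch (cxp x (2 * r - 2 * p - 2 * c - 2 + j) / v) (cxp x (2 * r)) *
       qpoch (cxp x (2 * c + 2 * p' - j) / v) (cxp x (2 * r))))
    (w : ℂ) (hw : w ≠ 0)
    (hd1 : qpoch (cxp x (2 * r - 2 * p - 2 * c - 2 + j) / w) (cxp x (2 * r)) ≠ 0)
    (hd2 : qpoch (cxp x (2 * c + 2 * p' - j) / w) (cxp x (2 * r)) ≠ 0)
    (hd3 : qpoch (cxp x (2 * r - 2 * p - 2 * c - 2 + j) / w⁻¹) (cxp x (2 * r)) ≠ 0)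
    (hd4 : qpoch (cxp x (2 * c + 2 * p' - j) / w⁻¹) (cxp x (2 * r)) ≠ 0) :
    g w * w * jtheta (cxp x (2 * r)) (cxp x (2 * c + 2 * p - j + 2) * w) *
        jtheta (cxp x (2 * r)) (cxp x (2 * c + 2 * p' - j) / w)
    + g w⁻¹ * w⁻¹ * jtheta (cxp x (2 * r)) (cxp x (2 * c + 2 * p - j + 2) / w) *
        jtheta (cxp x (2 * r)) (cxp x (2 * c + 2 * p' - j) * w) = 0 := by
  have cxp_sub : ∀ (u v : ℂ), cxp x (u - v) = cxp x u / cxp x v := by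
    intro u v; simp [cxp, sub_mul, Complex.exp_sub]
  have e1 : cxp x (2 * p + 2 * c + 2 - j) = cxp x (2 * c + 2 * p - j + 2) := by
    congr 1; ring
  have e2 : cxp x (2 * r - 2 * p - 2 * c - 2 + j)
      = cxp x (2 * r) / cxp x (2 * c + 2 * p - j + 2) := by
    rw [← cxp_sub]; congr 1; ring
  have e3 : cxp x (-2 * p' + 2 * r - 2 * c + j)
      = cxp x (2 * r) / cxp x (2 * c + 2 * p' - j) := by
    rw [← cxp_sub]; congr 1; ring
  subst hg
  set Q := cxp x (2 * r) with hQ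
  set A := cxp x (2 * (c:ℂ) + 2 * p - j + 2) with hA
  set Bv := cxp x (2 * (c:ℂ) + 2 * p' - j) with hB
  clear_value Q A Bv
  clear hQ hA hB
  simp only [jtheta, e1, e2, e3] at hd1 hd2 hd3 hd4 ⊢
  simp only [div_eq_mul_inv, mul_inv, inv_inv, mul_assoc] at hd1 hd2 hd3 hd4 ⊢
  generalize qpoch Q Q = P
  generalize qpoch (A * w) Q = T1
  generalize qpoch (A * w⁻¹) Q = T2
  generalize hS1 : qpoch (Q * (A⁻¹ * w)) Q = S1 at hd3 ⊢
  generalize hS2 : qpoch (Q * (A⁻¹ * w⁻¹)) Q = S2 at hd1 ⊢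
  generalize hU1 : qpoch (Bv * w) Q = U1 at hd4 ⊢
  generalize hU2 : qpoch (Bv * w⁻¹) Q = U2 at hd2 ⊢
  generalize qpoch (Q * (Bv⁻¹ * w)) Q = V1
  generalize qpoch (Q * (Bv⁻¹ * w⁻¹)) Q = V2
  field_simp
  ring
end
end

section
/- Let N ≥ 2 be an integer, let c, p, p′ ∈ ℝ, let j be an integer, and set q = x^{2r}. Define g*(w) = (1 − w²)·(x^{2c+2−N+j+2p′}·w;q)_∞·(x^{2r−2c+N−j−2p}·w;q)_∞ / ((x^{2r−2c−2+N−j−2p′}·w;q)_∞·(x^{2c−N+j+2p}·w;q)_∞). Then for every w ∈ ℂ∖{0} at which the denominators are nonzero (for w and for 1/w): g*(1/w)·w·Θ_q(x^{2c−N+j+2p}/w)·Θ_q(x^{2c+2−N+j+2p′}·w) + g*(w)·w^{−1}·Θ_q(x^{2c−N+j+2p}·w)·Θ_q(x^{2c+2−N+j+2p′}/w) = 0. (This is the weak equality g_j^*(1/w)·w·Θ_{x^{2r}}(x^{2c−N+j+2π_{1,j}}/w)·Θ_{x^{2r}}(x^{2c+2−N+j+2π_{1,j+1}}w) ∼_w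 0, with p = π_{1,j}, p′ = π_{1,j+1}.) -/
noncomputable section

lemma cxp_sub (x : ℝ) (u v : ℂ) : cxp x u / cxp x v = cxp x (u - v) := by
  simp [cxp, ← Complex.exp_sub, sub_mul]

lemma weak_aux (q a b w : ℂ) (hw : w ≠ 0)
    (hd1 : qpoch (q / b * w) q ≠ 0) (hd2 : qpoch (a * w) q ≠ 0)
    (hd3 : qpoch (q / b * w⁻¹) q ≠ 0) (hd4 : qpoch (a * w⁻¹) q ≠ 0) :
    (1 - (w⁻¹) ^ 2) * qpoch (b * w⁻¹) q * qpoch (q / a * w⁻¹) q /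
        (qpoch (q / b * w⁻¹) q * qpoch (a * w⁻¹) q) * w *
        jtheta q (a / w) * jtheta q (b * w)
    + (1 - w ^ 2) * qpoch (b * w) q * qpoch (q / a * w) q /
        (qpoch (q / b * w) q * qpoch (a * w) q) * w⁻¹ *
        jtheta q (a * w) * jtheta q (b / w) = 0 := by
  have e1 : a / w = a * w⁻¹ := div_eq_mul_inv _ _
  have e2 : q / (a * w⁻¹) = q / a * w := by rw [← div_div, div_eq_mul_inv, inv_inv]
  have e3 : q / (b * w) = q / b * w⁻¹ := by rw [← div_div, div_eq_mul_inv]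
  have e4 : b / w = b * w⁻¹ := div_eq_mul_inv _ _
  have e5 : q / (a * w) = q / a * w⁻¹ := by rw [← div_div, div_eq_mul_inv]
  have e6 : q / (b * w⁻¹) = q / b * w := by rw [← div_div, div_eq_mul_inv, inv_inv]
  simp only [jtheta, e1, e2, e3, e4, e5, e6]
  set Q := qpoch q q
  set A1 := qpoch (a * w) q
  set A2 := qpoch (a * w⁻¹) q
  set B1 := qpoch (b * w) q
  set B2 := qpoch (b * w⁻¹) q
  set C1 := qpoch (q / a * w) q
  set C2 := qpoch (q / a * w⁻¹) q
  set D1 := qpoch (q / b * w) q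
  set D2 := qpoch (q / b * w⁻¹) q
  field_simp
  ring

/-- The weak equality
`g*(1/w)·w·Θ_q(x^{2c-N+j+2p}/w)·Θ_q(x^{2c+2-N+j+2p'}w) ∼_w 0`:
the sum of the displayed expression at `w` and at `1/w` vanishes. -/
theorem weak_equality_g_star (x : ℝ) (hx0 : 0 < x) (hx1 : x < 1)
    (r : ℝ) (hr : 0 < r) (N : ℕ) (hN : 2 ≤ N) (c p p' : ℝ) (j : ℤ)
    (gs : ℂ → ℂ)
    (hgs : gs = fun v => (1 - v ^ 2) *
      qpoch (cxp x (2 * c + 2 - N + j + 2 * p') * v) (cxp x (2 * r)) *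
      qpoch (cxp x (2 * r - 2 * c + N - j - 2 * p) * v) (cxp x (2 * r)) /
      (qpoch (cxp x (2 * r - 2 * c - 2 + N - j - 2 * p') * v) (cxp x (2 * r)) *
       qpoch (cxp x (2 * c - N + j + 2 * p) * v) (cxp x (2 * r))))
    (w : ℂ) (hw : w ≠ 0)
    (hd1 : qpoch (cxp x (2 * r - 2 * c - 2 + N - j - 2 * p') * w) (cxp x (2 * r)) ≠ 0)
    (hd2 : qpoch (cxp x (2 * c - N + j + 2 * p) * w) (cxp x (2 * r)) ≠ 0)
    (hd3 : qpoch (cxp x (2 * r - 2 * c - 2 + N - j - 2 * p') * w⁻¹) (cxp x (2 * r)) ≠ 0)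
    (hd4 : qpoch (cxp x (2 * c - N + j + 2 * p) * w⁻¹) (cxp x (2 * r)) ≠ 0) :
    gs w⁻¹ * w * jtheta (cxp x (2 * r)) (cxp x (2 * c - N + j + 2 * p) / w) *
        jtheta (cxp x (2 * r)) (cxp x (2 * c + 2 - N + j + 2 * p') * w)
    + gs w * w⁻¹ * jtheta (cxp x (2 * r)) (cxp x (2 * c - N + j + 2 * p) * w) *
        jtheta (cxp x (2 * r)) (cxp x (2 * c + 2 - N + j + 2 * p') / w) = 0 := by
  have hA : cxp x (2 * r - 2 * c + N - j - 2 * p)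
      = cxp x (2 * r) / cxp x (2 * c - N + j + 2 * p) := by
    rw [cxp_sub]; ring_nf
  have hB : cxp x (2 * r - 2 * c - 2 + N - j - 2 * p')
      = cxp x (2 * r) / cxp x (2 * c + 2 - N + j + 2 * p') := by
    rw [cxp_sub]; ring_nf
  subst hgs
  simp only [hA, hB] at hd1 hd3 ⊢
  exact weak_aux _ _ _ _ hw hd1 hd2 hd3 hd4
end
end

section
/- With h(z) and h*(z) defined as below, for every z ∈ ℂ∖{0} at which all the displayed infinite products and theta functions are defined and nonzero: h(z)·h*(z) / (h(1/z)·h*(1/z)) = Θ_{x^{2r}}(x^{2c}·z)·Θ_{x^{2r}}(x^{2c+2p_N}/z) / (Θ_{x^{2r}}(x^{2c}/z)·Θ_{x^{2r}}(x^{2c+2p_N}·z)). -/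
noncomputable section

/-- The double infinite product `(z;p,q)_∞ = ∏_{n₁,n₂≥0} (1 - z p^{n₁} q^{n₂})`. -/
def qpoch2 (z p q : ℂ) : ℂ := ∏' n : ℕ × ℕ, (1 - z * p ^ n.1 * q ^ n.2)

/-- The displayed double product `(x^a · v ; x^s, x^t)_∞`. -/
def dq (x s t a : ℝ) (v : ℂ) : ℂ := qpoch2 (cxp x a * v) (cxp x s) (cxp x t)

/-- The boundary normalization function `h(z)`. -/
def hfun (x : ℝ) (N r : ℕ) (c : ℝ) (p : ℕ → ℝ) (z : ℂ) : ℂ :=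
  (dq x (2 * r) (4 * N) (2 * r + 2 * N - 2) (z ^ 2)⁻¹ *
      dq x (2 * r) (4 * N) (2 * N + 2) (z ^ 2)⁻¹ /
    (dq x (2 * r) (4 * N) (2 * r) (z ^ 2)⁻¹ *
      dq x (2 * r) (4 * N) (4 * N) (z ^ 2)⁻¹)) *
  (dq x (2 * r) (2 * N) (2 * N + 2 * c) z⁻¹ *
      dq x (2 * r) (2 * N) (2 * r - 2 * c) z⁻¹ /
    (dq x (2 * r) (2 * N) (2 * N + 2 * r - 2 * c - 2) z⁻¹ *
      dq x (2 * r) (2 * N) (2 * c + 2) z⁻¹)) *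
  ∏ j ∈ Finset.Icc 2 N,
    dq x (2 * r) (2 * N) (2 * r + 2 * N - 2 * c - 2 * p j) z⁻¹ *
      dq x (2 * r) (2 * N) (2 * c + 2 * p j) z⁻¹ /
    (dq x (2 * r) (2 * N) (2 * r + 2 * N - 2 * c - 2 * p j - 2) z⁻¹ *
      dq x (2 * r) (2 * N) (2 * c + 2 + 2 * p j) z⁻¹)

/-- The dual boundary normalization function `h*(z)`. -/
def hstar (x : ℝ) (N r : ℕ) (c : ℝ) (p : ℕ → ℝ) (z : ℂ) : ℂ :=
  (dq x (2 * r) (4 * N) (2 * r + 2 * N - 2) (z ^ 2) *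
      dq x (2 * r) (4 * N) (2 * N + 2) (z ^ 2) /
    (dq x (2 * r) (4 * N) (2 * r) (z ^ 2) *
      dq x (2 * r) (4 * N) (4 * N) (z ^ 2))) *
  (dq x (2 * r) (2 * N) (2 * N + 2 * c + 2 * p N) z *
      dq x (2 * r) (2 * N) (2 * r - 2 * c - 2 * p N) z /
    (dq x (2 * r) (2 * N) (2 * N + 2 * r - 2 * c - 2 - 2 * p N) z *
      dq x (2 * r) (2 * N) (2 * c + 2 + 2 * p N) z)) *
  ∏ j ∈ Finset.Icc 1 (N - 1),
    dq x (2 * r) (2 * N) (2 * r + 2 * N - 2 * c - 2 * p j) z *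
      dq x (2 * r) (2 * N) (2 * c + 2 * p j) z /
    (dq x (2 * r) (2 * N) (2 * r + 2 * N - 2 * c - 2 * p j - 2) z *
      dq x (2 * r) (2 * N) (2 * c + 2 + 2 * p j) z)

open Filter

lemma multipliable_one_sub {ι : Type*} (g : ι → ℂ) (hg : Summable fun i => ‖g i‖) :
    Multipliable fun i => 1 - g i := by
  by_cases h : ∀ i, 1 - g i ≠ 0
  · refine Complex.multipliable_of_summable_log (f := fun i => 1 - g i) ?_
    have hev : ∀ᶠ i in Filter.cofinite, ‖Complex.log (1 - g i)‖ ≤ 3/2 * ‖g i‖ := by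
      have ht : Tendsto (fun i => ‖g i‖) Filter.cofinite (nhds 0) :=
        hg.tendsto_cofinite_zero
      filter_upwards [ht.eventually (eventually_le_nhds (by norm_num : (0:ℝ) < 1/2))]
        with i hi
      have h2 := Complex.norm_log_one_add_half_le_self (z := -g i) (by simpa using hi)
      simpa [sub_eq_add_neg] using h2
    exact Summable.of_norm_bounded_eventually (hg.mul_left (3/2)) hev
  · push_neg at h
    obtain ⟨i0, hi0⟩ := h
    refine ⟨0, ?_⟩
    have hev : ∀ᶠ s : Finset ι in atTop, ∏ i ∈ s, (1 - g i) = 0 :=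
      Filter.eventually_atTop.2 ⟨{i0}, fun s hs =>
        Finset.prod_eq_zero (hs (Finset.mem_singleton_self i0)) hi0⟩
    exact Filter.Tendsto.congr' (Filter.EventuallyEq.symm hev) tendsto_const_nhds

lemma multipliable_one_sub_geom {q : ℂ} (hq : ‖q‖ < 1) (w : ℂ) :
    Multipliable fun n : ℕ => 1 - w * q ^ n := by
  refine multipliable_one_sub _ ?_
  have h : Summable fun n : ℕ => ‖q‖ ^ n :=
    summable_geometric_of_lt_one (norm_nonneg q) hq
  simpa [norm_mul, norm_pow] using (h.mul_left ‖w‖)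

lemma multipliable_one_sub_geom2 {q t : ℂ} (hq : ‖q‖ < 1) (ht : ‖t‖ < 1) (w : ℂ) :
    Multipliable fun n : ℕ × ℕ => 1 - w * q ^ n.1 * t ^ n.2 := by
  refine multipliable_one_sub _ ?_
  have h1 : Summable fun n : ℕ => ‖w‖ * ‖q‖ ^ n :=
    (summable_geometric_of_lt_one (norm_nonneg q) hq).mul_left ‖w‖
  have h2 : Summable fun n : ℕ => ‖t‖ ^ n :=
    summable_geometric_of_lt_one (norm_nonneg t) ht
  have h3 := h1.mul_of_nonneg h2
    (fun n => by positivity) (fun n => by positivity)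
  simpa [norm_mul, norm_pow, mul_assoc] using h3

lemma qpoch2_eq_iterated {q t : ℂ} (hq : ‖q‖ < 1) (ht : ‖t‖ < 1) (w : ℂ) :
    qpoch2 w q t = ∏' a : ℕ, ∏' b : ℕ, (1 - w * q ^ b * t ^ a) := by
  have hm : Multipliable fun n : ℕ × ℕ => 1 - w * q ^ n.2 * t ^ n.1 :=
    (multipliable_one_sub_geom2 hq ht w).prod_symm
  have e := (Equiv.prodComm ℕ ℕ).tprod_eq (fun n : ℕ × ℕ => 1 - w * q ^ n.1 * t ^ n.2)
  have e2 := Multipliable.tprod_prod' hm (fun a => by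
    have h := multipliable_one_sub_geom hq (w * t ^ a)
    exact h.congr fun b => by ring)
  calc qpoch2 w q t = ∏' n : ℕ × ℕ, (1 - w * q ^ n.2 * t ^ n.1) := by
        rw [qpoch2, ← e]; rfl
    _ = ∏' a : ℕ, ∏' b : ℕ, (1 - w * q ^ b * t ^ a) := e2

set_option maxHeartbeats 1000000 in
lemma qpoch2_split {q t : ℂ} (hq : ‖q‖ < 1) (ht : ‖t‖ < 1) (w : ℂ) :
    qpoch2 w q t = qpoch w q * qpoch2 (w * t) q t := by
  rw [qpoch2_eq_iterated hq ht w, qpoch2_eq_iterated hq ht (w * t)]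
  have hm2 : Multipliable fun n : ℕ × ℕ => 1 - w * q ^ n.2 * t ^ (n.1 + 1) := by
    have h := ((multipliable_one_sub_geom2 hq ht (w * t)).prod_symm)
    exact h.congr fun n => by simp only [Prod.fst_swap, Prod.snd_swap]; ring
  have hmfam : ∀ a : ℕ, Multipliable fun b : ℕ => 1 - w * q ^ b * t ^ (a + 1) :=
    fun a => (multipliable_one_sub_geom hq (w * t ^ (a + 1))).congr fun b => by ring
  have hmshift : Multipliable fun a : ℕ => ∏' b : ℕ, (1 - w * q ^ b * t ^ (a + 1)) := by
    have hsig : Multipliable fun m : (Σ _ : ℕ, ℕ) => 1 - w * q ^ m.2 * t ^ (m.1 + 1) :=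
      (Equiv.sigmaEquivProd ℕ ℕ).multipliable_iff.mpr hm2
    exact hsig.sigma' fun a => hmfam a
  rw [tprod_eq_zero_mul' hmshift]
  congr 1
  · simp [qpoch]
  · exact tprod_congr fun a => tprod_congr fun b => by ring

lemma norm_cxp {x : ℝ} (a : ℝ) : ‖cxp x a‖ = Real.exp (a * Real.log x) := by
  rw [cxp]
  rw [show ((a : ℂ) * (Real.log x : ℂ)) = ((a * Real.log x : ℝ) : ℂ) by push_cast; ring]
  simp [Complex.norm_exp]

lemma norm_cxp_lt_one {x : ℝ} (hx0 : 0 < x) (hx1 : x < 1) {a : ℝ} (ha : 0 < a) :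
    ‖cxp x a‖ < 1 := by
  rw [norm_cxp]
  have : a * Real.log x < 0 := mul_neg_of_pos_of_neg ha (Real.log_neg hx0 hx1)
  calc Real.exp (a * Real.log x) < Real.exp 0 := Real.exp_lt_exp.2 this
    _ = 1 := Real.exp_zero

lemma cxp_ne_zero (x : ℝ) (a : ℂ) : cxp x a ≠ 0 := Complex.exp_ne_zero _

lemma cxp_add (x : ℝ) (a b : ℝ) : cxp x ((a : ℂ) + (b : ℂ)) = cxp x a * cxp x b := by
  rw [cxp, cxp, cxp, ← Complex.exp_add]
  congr 1
  ring

lemma dq_congr {x s t : ℝ} {a b : ℝ} (v : ℂ) (h : a = b) :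
    dq x s t a v = dq x s t b v := by rw [h]

lemma dq_split {x : ℝ} (hx0 : 0 < x) (hx1 : x < 1) {s t : ℝ} (hs : 0 < s) (ht : 0 < t)
    (a : ℝ) (v : ℂ) :
    dq x s t a v = qpoch (cxp x a * v) (cxp x s) * dq x s t (a + t) v := by
  rw [dq, dq, qpoch2_split (norm_cxp_lt_one hx0 hx1 hs) (norm_cxp_lt_one hx0 hx1 ht)]
  congr 1
  congr 1
  rw [Complex.ofReal_add, cxp_add]
  ring

lemma qpoch_eq_dq_div {x : ℝ} (hx0 : 0 < x) (hx1 : x < 1) {s t : ℝ} (hs : 0 < s) (ht : 0 < t)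
    (a : ℝ) (v : ℂ) (hne : dq x s t (a + t) v ≠ 0) :
    qpoch (cxp x a * v) (cxp x s) = dq x s t a v / dq x s t (a + t) v := by
  rw [dq_split hx0 hx1 hs ht a v]
  field_simp

lemma cxp_congr (x : ℝ) {w w' : ℂ} (h : w = w') : cxp x w = cxp x w' := by rw [h]

/-- The square-bracket factor. -/
def Af (x : ℝ) (N r : ℕ) (u : ℂ) : ℂ :=
  dq x (2 * r) (4 * N) (2 * r + 2 * N - 2) u * dq x (2 * r) (4 * N) (2 * N + 2) u /
    (dq x (2 * r) (4 * N) (2 * r) u * dq x (2 * r) (4 * N) (4 * N) u)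

def Bf (x : ℝ) (N r : ℕ) (c : ℝ) (v : ℂ) : ℂ :=
  dq x (2 * r) (2 * N) (2 * N + 2 * c) v * dq x (2 * r) (2 * N) (2 * r - 2 * c) v /
    (dq x (2 * r) (2 * N) (2 * N + 2 * r - 2 * c - 2) v * dq x (2 * r) (2 * N) (2 * c + 2) v)

def Gf (x : ℝ) (N r : ℕ) (c : ℝ) (p : ℕ → ℝ) (v : ℂ) : ℂ :=
  dq x (2 * r) (2 * N) (2 * N + 2 * c + 2 * p N) v *
      dq x (2 * r) (2 * N) (2 * r - 2 * c - 2 * p N) v /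
    (dq x (2 * r) (2 * N) (2 * N + 2 * r - 2 * c - 2 - 2 * p N) v *
      dq x (2 * r) (2 * N) (2 * c + 2 + 2 * p N) v)

def Fj (x : ℝ) (N r : ℕ) (c : ℝ) (p : ℕ → ℝ) (j : ℕ) (v : ℂ) : ℂ :=
  dq x (2 * r) (2 * N) (2 * r + 2 * N - 2 * c - 2 * p j) v *
      dq x (2 * r) (2 * N) (2 * c + 2 * p j) v /
    (dq x (2 * r) (2 * N) (2 * r + 2 * N - 2 * c - 2 * p j - 2) v *
      dq x (2 * r) (2 * N) (2 * c + 2 + 2 * p j) v)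

lemma claimA_abs (Ap Am Bp Bm Gp Gm F1p F1m FNp FNm Pp Pm T2p T2m T1p T1m : ℂ)
    (hAp : Ap ≠ 0) (hAm : Am ≠ 0) (hBp : Bp ≠ 0) (hBm : Bm ≠ 0)
    (hGp : Gp ≠ 0) (hGm : Gm ≠ 0) (hF1p : F1p ≠ 0) (hF1m : F1m ≠ 0)
    (hFNp : FNp ≠ 0) (hFNm : FNm ≠ 0) (hPp : Pp ≠ 0) (hPm : Pm ≠ 0)
    (e1 : F1p * T2p = Pp) (e2 : F1m * T2m = Pm)
    (e3 : FNp * T1p = Pp) (e4 : FNm * T1m = Pm) :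
    Am * Bm * T2m * (Ap * Gp * T1p) / (Ap * Bp * T2p * (Am * Gm * T1m)) =
      Bm * F1p / (Bp * F1m) * (Gp * FNm / (Gm * FNp)) := by
  have hT2p : T2p ≠ 0 := by
    intro h; exact hPp (by rw [← e1, h, mul_zero])
  have hT1m : T1m ≠ 0 := by
    intro h; exact hPm (by rw [← e4, h, mul_zero])
  rw [div_mul_div_comm, div_eq_div_iff
    (mul_ne_zero (mul_ne_zero (mul_ne_zero hAp hBp) hT2p)
      (mul_ne_zero (mul_ne_zero hAm hGm) hT1m))
    (mul_ne_zero (mul_ne_zero hBp hF1m) (mul_ne_zero hGm hFNp))]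
  linear_combination (Am * Ap * Bm * Bp * Gp * Gm * FNp * T1p) * e2 +
    (Am * Ap * Bm * Bp * Gp * Gm * Pm) * e3 -
    (Am * Ap * Bm * Bp * Gp * Gm * FNm * T1m) * e1 -
    (Am * Ap * Bm * Bp * Gp * Gm * Pp) * e4

lemma claimB_abs (C c1p c1m c2p c2m c3p c3m c4p c4m d1p d1m d2p d2m : ℂ)
    (hC : C ≠ 0) (h1p : c1p ≠ 0) (h1m : c1m ≠ 0) (h2p : c2p ≠ 0) (h2m : c2m ≠ 0)
    (h3p : c3p ≠ 0) (h3m : c3m ≠ 0) (h4p : c4p ≠ 0) (h4m : c4m ≠ 0)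
    (hd1p : d1p ≠ 0) (hd1m : d1m ≠ 0) (hd2p : d2p ≠ 0) (hd2m : d2m ≠ 0) :
    c2m * c3m / (d1m * d2m) * (c4p * c1p / (d1p * d2p)) /
        (c2p * c3p / (d1p * d2p) * (c4m * c1m / (d1m * d2m))) =
      C * (c1p / c2p) * (c3m / c4m) / (C * (c1m / c2m) * (c3p / c4p)) := by
  field_simp

lemma jtheta_expand (x : ℝ) (hx0 : 0 < x) (hx1 : x < 1) (N r : ℕ)
    (hrpos : 0 < (r : ℝ)) (hNpos : 0 < (N : ℝ)) (a : ℝ) (v : ℂ) (hv : v ≠ 0)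
    (h1 : dq x (2 * r) (2 * N) (a + 2 * N) v ≠ 0)
    (h2 : dq x (2 * r) (2 * N) (2 * r - a + 2 * N) v⁻¹ ≠ 0) :
    jtheta (cxp x ((2 * (r : ℝ) : ℝ) : ℂ)) (cxp x ((a : ℝ) : ℂ) * v) =
      qpoch (cxp x ((2 * (r : ℝ) : ℝ) : ℂ)) (cxp x ((2 * (r : ℝ) : ℝ) : ℂ)) *
        (dq x (2 * r) (2 * N) a v / dq x (2 * r) (2 * N) (a + 2 * N) v) *
        (dq x (2 * r) (2 * N) (2 * r - a) v⁻¹ /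
          dq x (2 * r) (2 * N) (2 * r - a + 2 * N) v⁻¹) := by
  have hr2 : (0 : ℝ) < 2 * (r : ℝ) := by positivity
  have hN2 : (0 : ℝ) < 2 * (N : ℝ) := by positivity
  have harg : cxp x ((2 * (r : ℝ) : ℝ) : ℂ) / (cxp x ((a : ℝ) : ℂ) * v) =
      cxp x ((2 * (r : ℝ) - a : ℝ) : ℂ) * v⁻¹ := by
    rw [show ((2 * (r : ℝ) : ℝ) : ℂ) = ((a : ℝ) : ℂ) + ((2 * (r : ℝ) - a : ℝ) : ℂ) by
      push_cast; ring, cxp_add]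
    rw [div_eq_iff (mul_ne_zero (cxp_ne_zero _ _) hv)]
    field_simp
  rw [jtheta, harg, qpoch_eq_dq_div hx0 hx1 hr2 hN2 a v h1,
    qpoch_eq_dq_div hx0 hx1 hr2 hN2 (2 * (r : ℝ) - a) v⁻¹ h2]

/-- The self-consistency relation between `h` and `h*`:
`h(z)h*(z)/(h(1/z)h*(1/z)) = Θ(x^{2c}z)Θ(x^{2c+2p_N}/z)/(Θ(x^{2c}/z)Θ(x^{2c+2p_N}z))`. -/
theorem h_hstar_ratio (x : ℝ) (hx0 : 0 < x) (hx1 : x < 1)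
    (N r : ℕ) (hN : 2 ≤ N) (hr : N + 2 ≤ r)
    (c : ℝ) (hc0 : 0 < c) (hc1 : c < 1)
    (p : ℕ → ℝ) (hp1 : p 1 = 0)
    (z : ℂ) (hz : z ≠ 0)
    (hq4 : ∀ a ∈ ({2 * (r : ℝ) + 2 * N - 2, 2 * (N : ℝ) + 2, 2 * (r : ℝ),
        4 * (N : ℝ)} : Set ℝ), ∀ v ∈ ({z ^ 2, (z ^ 2)⁻¹} : Set ℂ),
      dq x (2 * r) (4 * N) a v ≠ 0)
    (hq2 : ∀ a : ℝ,
      (a ∈ ({2 * (N : ℝ) + 2 * c, 2 * (r : ℝ) - 2 * c, 2 * (N : ℝ) + 2 * r - 2 * c - 2,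
          2 * c + 2, 2 * (N : ℝ) + 2 * c + 2 * p N, 2 * (r : ℝ) - 2 * c - 2 * p N,
          2 * (N : ℝ) + 2 * r - 2 * c - 2 - 2 * p N, 2 * c + 2 + 2 * p N} : Set ℝ) ∨
        ∃ j ∈ Finset.Icc 1 N,
          a ∈ ({2 * (r : ℝ) + 2 * N - 2 * c - 2 * p j, 2 * c + 2 * p j,
            2 * (r : ℝ) + 2 * N - 2 * c - 2 * p j - 2, 2 * c + 2 + 2 * p j} : Set ℝ)) →
      ∀ v ∈ ({z, z⁻¹} : Set ℂ), dq x (2 * r) (2 * N) a v ≠ 0)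
    (hθ : ∀ v ∈ ({z, z⁻¹} : Set ℂ),
      jtheta (cxp x (2 * r)) (cxp x (2 * c) * v) ≠ 0 ∧
      jtheta (cxp x (2 * r)) (cxp x (2 * c + 2 * p N) * v) ≠ 0) :
    hfun x N r c p z * hstar x N r c p z /
        (hfun x N r c p z⁻¹ * hstar x N r c p z⁻¹)
      = jtheta (cxp x (2 * r)) (cxp x (2 * c) * z) *
          jtheta (cxp x (2 * r)) (cxp x (2 * c + 2 * p N) * z⁻¹) /
        (jtheta (cxp x (2 * r)) (cxp x (2 * c) * z⁻¹) *
          jtheta (cxp x (2 * r)) (cxp x (2 * c + 2 * p N) * z)) := by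
  have hrN : 0 < r := by omega
  have hrpos : (0 : ℝ) < (r : ℝ) := by exact_mod_cast hrN
  have hNN : 0 < N := by omega
  have hNpos : (0 : ℝ) < (N : ℝ) := by exact_mod_cast hNN
  have hzinv : z⁻¹ ≠ 0 := inv_ne_zero hz
  have hmz : z ∈ ({z, z⁻¹} : Set ℂ) := Set.mem_insert _ _
  have hmzi : z⁻¹ ∈ ({z, z⁻¹} : Set ℂ) := by simp
  have m1 : (1 : ℕ) ∈ Finset.Icc 1 N := Finset.mem_Icc.mpr ⟨le_rfl, by omega⟩
  have mN : N ∈ Finset.Icc 1 N := Finset.mem_Icc.mpr ⟨by omega, le_rfl⟩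
  have conv : ∀ (a b : ℝ) (v : ℂ), a = b →
      dq x (2 * (r : ℝ)) (2 * (N : ℝ)) a v ≠ 0 →
      dq x (2 * (r : ℝ)) (2 * (N : ℝ)) b v ≠ 0 :=
    fun a b v hab h => by rwa [dq_congr v hab] at h
  -- nonzero atoms, claim B family
  have hc1 : ∀ v ∈ ({z, z⁻¹} : Set ℂ),
      dq x (2 * (r : ℝ)) (2 * (N : ℝ)) (2 * c) v ≠ 0 := fun v hv =>
    conv _ _ _ (by rw [hp1]; ring)
      (hq2 (2 * c + 2 * p 1) (Or.inr ⟨1, m1, Or.inr (Or.inl rfl)⟩) v hv)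
  have hc2 : ∀ v ∈ ({z, z⁻¹} : Set ℂ),
      dq x (2 * (r : ℝ)) (2 * (N : ℝ)) (2 * c + 2 * (N : ℝ)) v ≠ 0 := fun v hv =>
    conv _ _ _ (by ring) (hq2 _ (Or.inl (Or.inl rfl)) v hv)
  have hc3 : ∀ v ∈ ({z, z⁻¹} : Set ℂ),
      dq x (2 * (r : ℝ)) (2 * (N : ℝ)) (2 * (r : ℝ) - 2 * c) v ≠ 0 := fun v hv =>
    hq2 _ (Or.inl (Or.inr (Or.inl rfl))) v hv
  have hc4 : ∀ v ∈ ({z, z⁻¹} : Set ℂ),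
      dq x (2 * (r : ℝ)) (2 * (N : ℝ)) (2 * (r : ℝ) - 2 * c + 2 * (N : ℝ)) v ≠ 0 :=
    fun v hv => conv _ _ _ (by rw [hp1]; ring)
      (hq2 (2 * (r : ℝ) + 2 * N - 2 * c - 2 * p 1) (Or.inr ⟨1, m1, Or.inl rfl⟩) v hv)
  have hd1 : ∀ v ∈ ({z, z⁻¹} : Set ℂ),
      dq x (2 * (r : ℝ)) (2 * (N : ℝ)) (2 * (N : ℝ) + 2 * r - 2 * c - 2) v ≠ 0 :=
    fun v hv => hq2 _ (Or.inl (Or.inr (Or.inr (Or.inl rfl)))) v hv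
  have hd2 : ∀ v ∈ ({z, z⁻¹} : Set ℂ),
      dq x (2 * (r : ℝ)) (2 * (N : ℝ)) (2 * c + 2) v ≠ 0 :=
    fun v hv => hq2 _ (Or.inl (Or.inr (Or.inr (Or.inr (Or.inl rfl))))) v hv
  -- nonzero atoms, claim C family
  have he1 : ∀ v ∈ ({z, z⁻¹} : Set ℂ),
      dq x (2 * (r : ℝ)) (2 * (N : ℝ)) (2 * c + 2 * p N) v ≠ 0 := fun v hv =>
    hq2 _ (Or.inr ⟨N, mN, Or.inr (Or.inl rfl)⟩) v hv
  have he2 : ∀ v ∈ ({z, z⁻¹} : Set ℂ),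
      dq x (2 * (r : ℝ)) (2 * (N : ℝ)) (2 * c + 2 * p N + 2 * (N : ℝ)) v ≠ 0 :=
    fun v hv => conv _ _ _ (by ring)
      (hq2 _ (Or.inl (Or.inr (Or.inr (Or.inr (Or.inr (Or.inl rfl)))))) v hv)
  have he3 : ∀ v ∈ ({z, z⁻¹} : Set ℂ),
      dq x (2 * (r : ℝ)) (2 * (N : ℝ)) (2 * (r : ℝ) - (2 * c + 2 * p N)) v ≠ 0 :=
    fun v hv => conv _ _ _ (by ring)
      (hq2 _ (Or.inl (Or.inr (Or.inr (Or.inr (Or.inr (Or.inr (Or.inl rfl))))))) v hv)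
  have he4 : ∀ v ∈ ({z, z⁻¹} : Set ℂ),
      dq x (2 * (r : ℝ)) (2 * (N : ℝ)) (2 * (r : ℝ) - (2 * c + 2 * p N) + 2 * (N : ℝ)) v ≠ 0 :=
    fun v hv => conv _ _ _ (by ring)
      (hq2 (2 * (r : ℝ) + 2 * N - 2 * c - 2 * p N) (Or.inr ⟨N, mN, Or.inl rfl⟩) v hv)
  have hf1 : ∀ v ∈ ({z, z⁻¹} : Set ℂ),
      dq x (2 * (r : ℝ)) (2 * (N : ℝ)) (2 * (N : ℝ) + 2 * r - 2 * c - 2 - 2 * p N) v ≠ 0 :=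
    fun v hv =>
      hq2 _ (Or.inl (Or.inr (Or.inr (Or.inr (Or.inr (Or.inr (Or.inr (Or.inl rfl)))))))) v hv
  have hf2 : ∀ v ∈ ({z, z⁻¹} : Set ℂ),
      dq x (2 * (r : ℝ)) (2 * (N : ℝ)) (2 * c + 2 + 2 * p N) v ≠ 0 := fun v hv =>
    hq2 _ (Or.inl (Or.inr (Or.inr (Or.inr (Or.inr (Or.inr (Or.inr (Or.inr rfl)))))))) v hv
  -- nonzero combinations
  have hAf : ∀ u ∈ ({z ^ 2, (z ^ 2)⁻¹} : Set ℂ), Af x N r u ≠ 0 := fun u hu =>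
    div_ne_zero
      (mul_ne_zero (hq4 _ (Or.inl rfl) u hu) (hq4 _ (Or.inr (Or.inl rfl)) u hu))
      (mul_ne_zero (hq4 _ (Or.inr (Or.inr (Or.inl rfl))) u hu)
        (hq4 _ (Or.inr (Or.inr (Or.inr rfl))) u hu))
  have hBf : ∀ v ∈ ({z, z⁻¹} : Set ℂ), Bf x N r c v ≠ 0 := fun v hv =>
    div_ne_zero
      (mul_ne_zero (hq2 _ (Or.inl (Or.inl rfl)) v hv) (hc3 v hv))
      (mul_ne_zero (hd1 v hv) (hd2 v hv))
  have hGf : ∀ v ∈ ({z, z⁻¹} : Set ℂ), Gf x N r c p v ≠ 0 := fun v hv =>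
    div_ne_zero
      (mul_ne_zero (hq2 _ (Or.inl (Or.inr (Or.inr (Or.inr (Or.inr (Or.inl rfl)))))) v hv)
        (hq2 _ (Or.inl (Or.inr (Or.inr (Or.inr (Or.inr (Or.inr (Or.inl rfl))))))) v hv))
      (mul_ne_zero (hf1 v hv) (hf2 v hv))
  have hFj : ∀ j ∈ Finset.Icc 1 N, ∀ v ∈ ({z, z⁻¹} : Set ℂ), Fj x N r c p j v ≠ 0 :=
    fun j hj v hv =>
    div_ne_zero
      (mul_ne_zero (hq2 _ (Or.inr ⟨j, hj, Or.inl rfl⟩) v hv)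
        (hq2 _ (Or.inr ⟨j, hj, Or.inr (Or.inl rfl)⟩) v hv))
      (mul_ne_zero (hq2 _ (Or.inr ⟨j, hj, Or.inr (Or.inr (Or.inl rfl))⟩) v hv)
        (hq2 _ (Or.inr ⟨j, hj, Or.inr (Or.inr (Or.inr rfl))⟩) v hv))
  have hPz : (∏ j ∈ Finset.Icc 1 N, Fj x N r c p j z) ≠ 0 :=
    Finset.prod_ne_zero_iff.mpr fun j hj => hFj j hj z hmz
  have hPzi : (∏ j ∈ Finset.Icc 1 N, Fj x N r c p j z⁻¹) ≠ 0 :=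
    Finset.prod_ne_zero_iff.mpr fun j hj => hFj j hj z⁻¹ hmzi
  -- product splitting
  have hI2 : Finset.Icc 2 N = Finset.Ioc 1 N := by ext m; simp; omega
  have hI1 : Finset.Icc 1 (N - 1) = Finset.Ico 1 N := by ext m; simp; omega
  have hsplit1 : ∀ v : ℂ, Fj x N r c p 1 v * ∏ j ∈ Finset.Icc 2 N, Fj x N r c p j v =
      ∏ j ∈ Finset.Icc 1 N, Fj x N r c p j v := by
    intro v
    rw [hI2, ← Finset.Ioc_insert_left (by omega : 1 ≤ N), Finset.prod_insert (by simp)]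
  have hsplit2 : ∀ v : ℂ, Fj x N r c p N v * ∏ j ∈ Finset.Icc 1 (N - 1), Fj x N r c p j v =
      ∏ j ∈ Finset.Icc 1 N, Fj x N r c p j v := by
    intro v
    rw [hI1, ← Finset.Ico_insert_right (by omega : 1 ≤ N), Finset.prod_insert (by simp)]
  -- structural forms of hfun/hstar
  have Hf1 : hfun x N r c p z =
      Af x N r (z ^ 2)⁻¹ * Bf x N r c z⁻¹ * ∏ j ∈ Finset.Icc 2 N, Fj x N r c p j z⁻¹ := rfl
  have Hf2 : hfun x N r c p z⁻¹ =
      Af x N r (z ^ 2) * Bf x N r c z * ∏ j ∈ Finset.Icc 2 N, Fj x N r c p j z := by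
    have h0 : hfun x N r c p z⁻¹ =
        Af x N r ((z⁻¹) ^ 2)⁻¹ * Bf x N r c z⁻¹⁻¹ *
          ∏ j ∈ Finset.Icc 2 N, Fj x N r c p j z⁻¹⁻¹ := rfl
    rw [h0, inv_pow, inv_inv, inv_inv]
  have Hs1 : hstar x N r c p z =
      Af x N r (z ^ 2) * Gf x N r c p z * ∏ j ∈ Finset.Icc 1 (N - 1), Fj x N r c p j z := rfl
  have Hs2 : hstar x N r c p z⁻¹ =
      Af x N r (z ^ 2)⁻¹ * Gf x N r c p z⁻¹ *
        ∏ j ∈ Finset.Icc 1 (N - 1), Fj x N r c p j z⁻¹ := by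
    have h0 : hstar x N r c p z⁻¹ =
        Af x N r ((z⁻¹) ^ 2) * Gf x N r c p z⁻¹ *
          ∏ j ∈ Finset.Icc 1 (N - 1), Fj x N r c p j z⁻¹ := rfl
    rw [h0, inv_pow]
  -- cast normalizations for jtheta arguments
  have hQc : cxp x (2 * (r : ℂ)) = cxp x ((2 * (r : ℝ) : ℝ) : ℂ) :=
    cxp_congr _ (by push_cast; ring)
  have hUc : cxp x (2 * (c : ℂ)) = cxp x ((2 * c : ℝ) : ℂ) :=
    cxp_congr _ (by push_cast; ring)
  have hU'c : cxp x (2 * (c : ℂ) + 2 * (p N : ℂ)) = cxp x ((2 * c + 2 * p N : ℝ) : ℂ) :=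
    cxp_congr _ (by push_cast; ring)
  -- theta expansions
  have Hθ1 := jtheta_expand x hx0 hx1 N r hrpos hNpos (2 * c) z hz (hc2 z hmz) (hc4 z⁻¹ hmzi)
  have Hθ2 := jtheta_expand x hx0 hx1 N r hrpos hNpos (2 * c) z⁻¹ hzinv (hc2 z⁻¹ hmzi)
    (by rw [inv_inv]; exact hc4 z hmz)
  rw [inv_inv] at Hθ2
  have Hθ3 := jtheta_expand x hx0 hx1 N r hrpos hNpos (2 * c + 2 * p N) z⁻¹ hzinv
    (he2 z⁻¹ hmzi) (by rw [inv_inv]; exact he4 z hmz)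
  rw [inv_inv] at Hθ3
  have Hθ4 := jtheta_expand x hx0 hx1 N r hrpos hNpos (2 * c + 2 * p N) z hz
    (he2 z hmz) (he4 z⁻¹ hmzi)
  have hC : qpoch (cxp x ((2 * (r : ℝ) : ℝ) : ℂ)) (cxp x ((2 * (r : ℝ) : ℝ) : ℂ)) ≠ 0 := by
    have h := (hθ z hmz).1
    rw [hQc, hUc, Hθ1] at h
    exact (mul_ne_zero_iff.1 (mul_ne_zero_iff.1 h).1).1
  rw [Hf1, Hf2, Hs1, Hs2, hQc, hUc, hU'c]
  rw [claimA_abs (Af x N r (z ^ 2)) (Af x N r (z ^ 2)⁻¹) (Bf x N r c z) (Bf x N r c z⁻¹)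
      (Gf x N r c p z) (Gf x N r c p z⁻¹) (Fj x N r c p 1 z) (Fj x N r c p 1 z⁻¹)
      (Fj x N r c p N z) (Fj x N r c p N z⁻¹)
      (∏ j ∈ Finset.Icc 1 N, Fj x N r c p j z) (∏ j ∈ Finset.Icc 1 N, Fj x N r c p j z⁻¹)
      (∏ j ∈ Finset.Icc 2 N, Fj x N r c p j z) (∏ j ∈ Finset.Icc 2 N, Fj x N r c p j z⁻¹)
      (∏ j ∈ Finset.Icc 1 (N - 1), Fj x N r c p j z)
      (∏ j ∈ Finset.Icc 1 (N - 1), Fj x N r c p j z⁻¹)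
      (hAf _ (Or.inl rfl)) (hAf _ (Or.inr rfl)) (hBf z hmz) (hBf z⁻¹ hmzi)
      (hGf z hmz) (hGf z⁻¹ hmzi) (hFj 1 m1 z hmz) (hFj 1 m1 z⁻¹ hmzi)
      (hFj N mN z hmz) (hFj N mN z⁻¹ hmzi) hPz hPzi
      (hsplit1 z) (hsplit1 z⁻¹) (hsplit2 z) (hsplit2 z⁻¹)]
  refine Eq.trans ?_ (div_mul_div_comm _ _ _ _)
  congr 1
  · rw [Hθ1, Hθ2]
    have cv1 : ∀ v : ℂ, dq x (2 * (r : ℝ)) (2 * (N : ℝ)) (2 * (N : ℝ) + 2 * c) v =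
        dq x (2 * (r : ℝ)) (2 * (N : ℝ)) (2 * c + 2 * (N : ℝ)) v :=
      fun v => dq_congr v (by ring)
    have cv2 : ∀ v : ℂ,
        dq x (2 * (r : ℝ)) (2 * (N : ℝ)) (2 * (r : ℝ) + 2 * (N : ℝ) - 2 * c - 2 * p 1) v =
        dq x (2 * (r : ℝ)) (2 * (N : ℝ)) (2 * (r : ℝ) - 2 * c + 2 * (N : ℝ)) v :=
      fun v => dq_congr v (by rw [hp1]; ring)
    have cv3 : ∀ v : ℂ, dq x (2 * (r : ℝ)) (2 * (N : ℝ)) (2 * c + 2 * p 1) v =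
        dq x (2 * (r : ℝ)) (2 * (N : ℝ)) (2 * c) v :=
      fun v => dq_congr v (by rw [hp1]; ring)
    have cv4 : ∀ v : ℂ,
        dq x (2 * (r : ℝ)) (2 * (N : ℝ)) (2 * (r : ℝ) + 2 * (N : ℝ) - 2 * c - 2 * p 1 - 2) v =
        dq x (2 * (r : ℝ)) (2 * (N : ℝ)) (2 * (N : ℝ) + 2 * (r : ℝ) - 2 * c - 2) v :=
      fun v => dq_congr v (by rw [hp1]; ring)
    have cv5 : ∀ v : ℂ, dq x (2 * (r : ℝ)) (2 * (N : ℝ)) (2 * c + 2 + 2 * p 1) v =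
        dq x (2 * (r : ℝ)) (2 * (N : ℝ)) (2 * c + 2) v :=
      fun v => dq_congr v (by rw [hp1]; ring)
    simp only [Bf, Fj, cv1, cv2, cv3, cv4, cv5]
    exact claimB_abs _ _ _ _ _ _ _ _ _ _ _ _ _ hC (hc1 z hmz) (hc1 z⁻¹ hmzi)
      (hc2 z hmz) (hc2 z⁻¹ hmzi) (hc3 z hmz) (hc3 z⁻¹ hmzi) (hc4 z hmz) (hc4 z⁻¹ hmzi)
      (hd1 z hmz) (hd1 z⁻¹ hmzi) (hd2 z hmz) (hd2 z⁻¹ hmzi)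
  · rw [Hθ3, Hθ4]
    have cw1 : ∀ v : ℂ, dq x (2 * (r : ℝ)) (2 * (N : ℝ)) (2 * (N : ℝ) + 2 * c + 2 * p N) v =
        dq x (2 * (r : ℝ)) (2 * (N : ℝ)) (2 * c + 2 * p N + 2 * (N : ℝ)) v :=
      fun v => dq_congr v (by ring)
    have cw2 : ∀ v : ℂ, dq x (2 * (r : ℝ)) (2 * (N : ℝ)) (2 * (r : ℝ) - 2 * c - 2 * p N) v =
        dq x (2 * (r : ℝ)) (2 * (N : ℝ)) (2 * (r : ℝ) - (2 * c + 2 * p N)) v :=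
      fun v => dq_congr v (by ring)
    have cw3 : ∀ v : ℂ,
        dq x (2 * (r : ℝ)) (2 * (N : ℝ)) (2 * (r : ℝ) + 2 * (N : ℝ) - 2 * c - 2 * p N) v =
        dq x (2 * (r : ℝ)) (2 * (N : ℝ)) (2 * (r : ℝ) - (2 * c + 2 * p N) + 2 * (N : ℝ)) v :=
      fun v => dq_congr v (by ring)
    have cw4 : ∀ v : ℂ,
        dq x (2 * (r : ℝ)) (2 * (N : ℝ)) (2 * (r : ℝ) + 2 * (N : ℝ) - 2 * c - 2 * p N - 2) v =
        dq x (2 * (r : ℝ)) (2 * (N : ℝ)) (2 * (N : ℝ) + 2 * (r : ℝ) - 2 * c - 2 - 2 * p N) v :=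
      fun v => dq_congr v (by ring)
    simp only [Gf, Fj, cw1, cw2, cw3, cw4]
    exact claimB_abs _ _ _ _ _ _ _ _ _ _ _ _ _ hC (he1 z⁻¹ hmzi) (he1 z hmz)
      (he2 z⁻¹ hmzi) (he2 z hmz) (he3 z⁻¹ hmzi) (he3 z hmz) (he4 z⁻¹ hmzi) (he4 z hmz)
      (hf1 z⁻¹ hmzi) (hf1 z hmz) (hf2 z⁻¹ hmzi) (hf2 z hmz)
end
end
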